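/- arXiv:1804.03411 — 2 statements merged into one kernel-verified Lean document; each statement's English description precedes it below -/
import Mathlib

section
/- Let ξ ∈ W^{1,1}([0,t],ℝⁿ) with ξ(0)=x₀, ξ(t)=x, and suppose the Carathéodory equation u'(s) = L(ξ(s),u(s),ξ'(s)) with u(0)=u₀ admits an absolutely continuous solution u_ξ. Then for any a ∈ ℝ, the function s ↦ L(ξ(s), a, ξ'(s)) belongs to L¹([0,t]). Conversely, if s ↦ L(ξ(s),a,ξ'(s)) ∈ L¹([0,t]) for some a ∈ ℝ, then the Carathéodory equation admits an absolutely continuous solution. -/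
open MeasureTheory Set Function

lemma picard_exists (t : ℝ) (ht : 0 < t) (g : ℝ → ℝ → ℝ) (K : ℝ) (hK : 0 ≤ K)
    (hlip : ∀ r y z, |g r y - g r z| ≤ K * |y - z|)
    (hmeas : ∀ u : ℝ → ℝ, Continuous u →
      AEStronglyMeasurable (fun r => g r (u r)) (volume.restrict (Icc 0 t)))
    (a : ℝ) (hga : IntegrableOn (fun r => g r a) (Icc (0:ℝ) t))
    (u₀ : ℝ) :
    ∃ u : ℝ → ℝ, IntegrableOn (fun r => g r (u r)) (Icc (0:ℝ) t) ∧
      ∀ s ∈ Icc (0:ℝ) t, u s = u₀ + ∫ r in (0:ℝ)..s, g r (u r) := by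
  set proj : ℝ → Icc (0:ℝ) t := projIcc 0 t ht.le with hproj
  -- integrability of the composite for any continuous map on Icc
  have key : ∀ u : C(Icc (0:ℝ) t, ℝ),
      IntegrableOn (fun r => g r (u (proj r))) (Icc (0:ℝ) t) := by
    intro u
    have hU : Continuous fun r => u (proj r) := u.continuous.comp continuous_projIcc
    have hm := hmeas _ hU
    have hbd : IntegrableOn (fun r => |g r a| + K * (‖u‖ + |a|)) (Icc (0:ℝ) t) :=
      hga.norm.add (integrableOn_const measure_Icc_lt_top.ne)
    refine hbd.mono' hm ?_
    · filter_upwards with r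
      have h1 : |g r (u (proj r)) - g r a| ≤ K * |u (proj r) - a| := hlip _ _ _
      have h2 : |u (proj r)| ≤ ‖u‖ := by
        simpa [Real.norm_eq_abs] using u.norm_coe_le_norm (proj r)
      have : |g r (u (proj r))| ≤ |g r a| + K * (‖u‖ + |a|) := by
        calc |g r (u (proj r))| ≤ |g r (u (proj r)) - g r a| + |g r a| := by
              simpa using abs_sub_abs_le_abs_sub (g r (u (proj r))) (g r a) |>.trans le_rfl
          _ ≤ K * |u (proj r) - a| + |g r a| := by linarith
          _ ≤ K * (‖u‖ + |a|) + |g r a| := by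
              have : |u (proj r) - a| ≤ ‖u‖ + |a| :=
                (abs_sub _ _).trans (by linarith [h2])
              nlinarith
          _ = |g r a| + K * (‖u‖ + |a|) := by ring
      simpa [Real.norm_eq_abs] using this
  -- the Picard map
  have hcontT : ∀ u : C(Icc (0:ℝ) t, ℝ),
      ContinuousOn (fun s => u₀ + ∫ r in (0:ℝ)..s, g r (u (proj r))) (Icc (0:ℝ) t) := by
    intro u
    have h1 : IntegrableOn (fun r => g r (u (proj r))) (uIcc (0:ℝ) t) := by
      rw [uIcc_of_le ht.le]; exact key u
    have := intervalIntegral.continuousOn_primitive_interval (a := 0) (b := t) h1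
    rw [uIcc_of_le ht.le] at this
    exact continuousOn_const.add this
  set T : C(Icc (0:ℝ) t, ℝ) → C(Icc (0:ℝ) t, ℝ) := fun u =>
    ⟨(Icc (0:ℝ) t).restrict (fun s => u₀ + ∫ r in (0:ℝ)..s, g r (u (proj r))),
      (hcontT u).restrict⟩ with hT
  have hTapp : ∀ (u : C(Icc (0:ℝ) t, ℝ)) (p : Icc (0:ℝ) t),
      T u p = u₀ + ∫ r in (0:ℝ)..(p:ℝ), g r (u (proj r)) := fun u p => rfl
  -- interval integrability of composites up to any p in Icc
  have keyI : ∀ (u : C(Icc (0:ℝ) t, ℝ)) (p : ℝ), p ∈ Icc (0:ℝ) t →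
      IntervalIntegrable (fun r => g r (u (proj r))) volume 0 p := by
    intro u p hp
    rw [intervalIntegrable_iff_integrableOn_Icc_of_le hp.1]
    exact (key u).mono_set (Icc_subset_Icc le_rfl hp.2)
  -- iterated contraction estimate
  have est : ∀ (m : ℕ) (u v : C(Icc (0:ℝ) t, ℝ)) (p : Icc (0:ℝ) t),
      |T^[m] u p - T^[m] v p| ≤ K ^ m * (p:ℝ) ^ m / (m.factorial : ℝ) * dist u v := by
    intro m
    induction m with
    | zero =>
      intro u v p
      simpa [Real.dist_eq] using ContinuousMap.dist_apply_le_dist (f := u) (g := v) p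
    | succ m ih =>
      intro u v p
      set A : C(Icc (0:ℝ) t, ℝ) := T^[m] u with hA
      set B : C(Icc (0:ℝ) t, ℝ) := T^[m] v with hB
      have hstep : T^[m+1] u p - T^[m+1] v p
          = ∫ r in (0:ℝ)..(p:ℝ), (g r (A (proj r)) - g r (B (proj r))) := by
        rw [iterate_succ_apply', iterate_succ_apply', hTapp, hTapp,
          intervalIntegral.integral_sub (keyI A p p.2) (keyI B p p.2)]
        ring
      rw [hstep]
      have hbound : ∀ r ∈ Set.uIoc (0:ℝ) (p:ℝ),
          ‖g r (A (proj r)) - g r (B (proj r))‖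
            ≤ K * (K ^ m * r ^ m / (m.factorial : ℝ) * dist u v) := by
        intro r hr
        rw [uIoc_of_le p.2.1] at hr
        have hrI : r ∈ Icc (0:ℝ) t := ⟨hr.1.le, hr.2.trans p.2.2⟩
        have h1 : |g r (A (proj r)) - g r (B (proj r))| ≤ K * |A (proj r) - B (proj r)| :=
          hlip _ _ _
        have h2 := ih u v (proj r)
        have hc : ((proj r : ℝ)) = r := by
          rw [hproj, projIcc_of_mem ht.le hrI]
        rw [hc] at h2
        rw [Real.norm_eq_abs]
        calc |g r (A (proj r)) - g r (B (proj r))| ≤ K * |A (proj r) - B (proj r)| := h1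
          _ ≤ K * (K ^ m * r ^ m / (m.factorial : ℝ) * dist u v) :=
              mul_le_mul_of_nonneg_left h2 hK
      have hGint : IntervalIntegrable
          (fun r => K * (K ^ m * r ^ m / (m.factorial : ℝ) * dist u v)) volume 0 (p:ℝ) := by
        exact (continuous_const.mul
          (((continuous_const.mul (continuous_pow m)).div_const _).mul
            continuous_const)).intervalIntegrable (μ := volume) 0 (p:ℝ)
      have := intervalIntegral.norm_integral_le_of_norm_le
        (f := fun r => g r (A (proj r)) - g r (B (proj r)))
        p.2.1 (Filter.Eventually.of_forall fun r hr => hbound r (Set.Ioc_subset_uIoc hr)) hGint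
      rw [Real.norm_eq_abs] at this
      refine this.trans ?_
      have hcomp : ∫ r in (0:ℝ)..(p:ℝ), K * (K ^ m * r ^ m / (m.factorial : ℝ) * dist u v)
          = K ^ (m+1) * (p:ℝ) ^ (m+1) / ((m+1).factorial : ℝ) * dist u v := by
        have : (fun r : ℝ => K * (K ^ m * r ^ m / (m.factorial : ℝ) * dist u v))
            = fun r : ℝ => (K ^ (m+1) / (m.factorial : ℝ) * dist u v) * r ^ m := by
          funext r; ring
        rw [this, intervalIntegral.integral_const_mul, integral_pow]
        have hm : ((m.factorial : ℝ)) ≠ 0 := Nat.cast_ne_zero.2 m.factorial_ne_zero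
        have hm1 : ((m:ℝ) + 1) ≠ 0 := by positivity
        rw [Nat.factorial_succ]
        push_cast
        field_simp
        ring
      rw [hcomp]
  -- deduce a contraction for some iterate
  obtain ⟨m, hm⟩ : ∃ m : ℕ, (K * t) ^ m / (m.factorial : ℝ) < 1 := by
    have h0 := FloorSemiring.tendsto_pow_div_factorial_atTop (K * t)
    have := (h0.eventually (eventually_lt_nhds (by norm_num : (0:ℝ) < 1))).exists
    simpa using this
  have hCnn : 0 ≤ (K * t) ^ m / (m.factorial : ℝ) := by positivity
  set C : NNReal := ⟨(K * t) ^ m / (m.factorial : ℝ), hCnn⟩ with hC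
  have hdist : ∀ u v : C(Icc (0:ℝ) t, ℝ), dist (T^[m] u) (T^[m] v) ≤ C * dist u v := by
    intro u v
    have hCd : (0:ℝ) ≤ (C:ℝ) * dist u v := mul_nonneg hCnn dist_nonneg
    rw [ContinuousMap.dist_le hCd]
    intro p
    rw [Real.dist_eq]
    refine (est m u v p).trans ?_
    have hpt : (p:ℝ) ^ m ≤ t ^ m := pow_le_pow_left₀ p.2.1 p.2.2 m
    have : K ^ m * (p:ℝ) ^ m ≤ (K * t) ^ m := by
      rw [mul_pow]
      exact mul_le_mul_of_nonneg_left hpt (pow_nonneg hK m)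
    have hfac : (0:ℝ) < (m.factorial : ℝ) := by positivity
    have h2 : K ^ m * (p:ℝ) ^ m / (m.factorial : ℝ) ≤ (K * t) ^ m / (m.factorial : ℝ) :=
      (div_le_div_iff_of_pos_right hfac).2 this
    calc K ^ m * (p:ℝ) ^ m / (m.factorial : ℝ) * dist u v
        ≤ (K * t) ^ m / (m.factorial : ℝ) * dist u v :=
          mul_le_mul_of_nonneg_right h2 dist_nonneg
      _ = (C:ℝ) * dist u v := rfl
  have hcontr : ContractingWith C (T^[m]) :=
    ⟨by exact_mod_cast hm, LipschitzWith.of_dist_le_mul hdist⟩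
  haveI : Nonempty C(Icc (0:ℝ) t, ℝ) := ⟨ContinuousMap.const _ 0⟩
  set y : C(Icc (0:ℝ) t, ℝ) := hcontr.fixedPoint (T^[m]) with hy
  have hyfix : Function.IsFixedPt (T^[m]) y := hcontr.fixedPoint_isFixedPt
  have hTy : Function.IsFixedPt (T^[m]) (T y) := by
    show T^[m] (T y) = T y
    rw [← iterate_succ_apply, iterate_succ_apply', hyfix]
  have hfix : T y = y := (hcontr.fixedPoint_unique hTy).trans (hcontr.fixedPoint_unique hyfix).symm
  refine ⟨fun s => y (proj s), key y, fun s hs => ?_⟩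
  have h1 : y (proj s) = T y (proj s) := by rw [hfix]
  have hps : ((proj s : ℝ)) = s := by rw [hproj, projIcc_of_mem ht.le hs]
  show y (proj s) = u₀ + ∫ r in (0:ℝ)..s, g r (y (proj r))
  rw [h1, hTapp, hps]

open MeasureTheory Set

/-- `𝒜 = 𝒜'`: the Carathéodory equation along `ξ` admits an absolutely
continuous solution iff `s ↦ L(ξ(s),a,ξ'(s))` is integrable (for any/some `a`). -/
theorem herglotz_admissible_iff_integrable
    (n : ℕ) (L : (Fin n → ℝ) → ℝ → (Fin n → ℝ) → ℝ)
    (K c₀ : ℝ) (θ₀ θbar₀ : ℝ → ℝ)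
    (hL_smooth : ContDiff ℝ 2
      (fun p : (Fin n → ℝ) × ℝ × (Fin n → ℝ) => L p.1 p.2.1 p.2.2))
    (hconv : ∀ x r, StrictConvexOn ℝ univ (fun v => L x r v))
    (hLr : ∀ x r v, |deriv (fun r' => L x r' v) r| ≤ K)
    (hθ₀_nonneg : ∀ r, 0 ≤ θ₀ r) (hθ₀_mono : Monotone θ₀) (hc₀ : 0 < c₀)
    (hL2 : ∀ x v, θ₀ ‖v‖ - c₀ ≤ L x 0 v ∧ L x 0 v ≤ θbar₀ ‖v‖)
    (t : ℝ) (ht : 0 < t) (x₀ x : Fin n → ℝ) (u₀ : ℝ)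
    (ξ ξ' : ℝ → (Fin n → ℝ))
    (hξ'int : IntervalIntegrable ξ' volume 0 t)
    (hξ : ∀ s ∈ Icc (0:ℝ) t, ξ s = x₀ + ∫ r in (0:ℝ)..s, ξ' r)
    (hξt : ξ t = x) :
    ((∃ u : ℝ → ℝ,
        IntervalIntegrable (fun r => L (ξ r) (u r) (ξ' r)) volume 0 t ∧
        ∀ s ∈ Icc (0:ℝ) t,
          u s = u₀ + ∫ r in (0:ℝ)..s, L (ξ r) (u r) (ξ' r)) →
      ∀ a : ℝ, IntervalIntegrable (fun s => L (ξ s) a (ξ' s)) volume 0 t) ∧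
    ((∃ a : ℝ, IntervalIntegrable (fun s => L (ξ s) a (ξ' s)) volume 0 t) →
      ∃ u : ℝ → ℝ,
        IntervalIntegrable (fun r => L (ξ r) (u r) (ξ' r)) volume 0 t ∧
        ∀ s ∈ Icc (0:ℝ) t,
          u s = u₀ + ∫ r in (0:ℝ)..s, L (ξ r) (u r) (ξ' r)) := by
  have hK0 : 0 ≤ K := (abs_nonneg _).trans (hLr 0 0 0)
  have hLcont : Continuous (fun p : (Fin n → ℝ) × ℝ × (Fin n → ℝ) => L p.1 p.2.1 p.2.2) :=
    hL_smooth.continuous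
  -- Lipschitz continuity in the middle variable
  have hlip : ∀ (xx v : Fin n → ℝ) (y z : ℝ), |L xx y v - L xx z v| ≤ K * |y - z| := by
    intro xx v y z
    have hdiff : Differentiable ℝ (fun r' : ℝ => L xx r' v) := by
      have h1 : ContDiff ℝ 2 (fun r' : ℝ => ((xx, r', v) : (Fin n → ℝ) × ℝ × (Fin n → ℝ))) :=
        ContDiff.prodMk contDiff_const (ContDiff.prodMk contDiff_id contDiff_const)
      exact (hL_smooth.comp h1).differentiable (by norm_num)
    have := convex_univ.norm_image_sub_le_of_norm_deriv_le (f := fun r' : ℝ => L xx r' v)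
      (fun r _ => hdiff r)
      (fun r _ => by simpa [Real.norm_eq_abs] using hLr xx r v)
      (mem_univ z) (mem_univ y)
    simpa [Real.norm_eq_abs] using this
  -- measurability
  have hμ : volume.restrict (Ioc (0:ℝ) t) = volume.restrict (Icc (0:ℝ) t) :=
    Measure.restrict_congr_set Ioc_ae_eq_Icc
  have hξ'meas : AEStronglyMeasurable ξ' (volume.restrict (Icc (0:ℝ) t)) := by
    have := hξ'int.1.aestronglyMeasurable
    rwa [hμ] at this
  have hξcont : ContinuousOn ξ (Icc (0:ℝ) t) := by
    have hprim : ContinuousOn (fun s => ∫ r in (0:ℝ)..s, ξ' r) (Icc (0:ℝ) t) := by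
      have := intervalIntegral.continuousOn_primitive_interval' hξ'int left_mem_uIcc
      rwa [uIcc_of_le ht.le] at this
    exact (continuousOn_const.add hprim).congr hξ
  have hξmeas : AEStronglyMeasurable ξ (volume.restrict (Icc (0:ℝ) t)) :=
    hξcont.aestronglyMeasurable measurableSet_Icc
  have hmeas : ∀ u : ℝ → ℝ, Continuous u →
      AEStronglyMeasurable (fun r => L (ξ r) (u r) (ξ' r)) (volume.restrict (Icc (0:ℝ) t)) := by
    intro u hu
    exact hLcont.comp_aestronglyMeasurable
      (AEStronglyMeasurable.prodMk hξmeas (AEStronglyMeasurable.prodMk (hu.aestronglyMeasurable) hξ'meas))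
  constructor
  · -- forward direction
    rintro ⟨u, huint, hueq⟩ a
    have huI : IntegrableOn (fun r => L (ξ r) (u r) (ξ' r)) (Icc (0:ℝ) t) :=
      (intervalIntegrable_iff_integrableOn_Icc_of_le ht.le).1 huint
    have hucont : ContinuousOn u (Icc (0:ℝ) t) := by
      have hprim := intervalIntegral.continuousOn_primitive_interval' huint left_mem_uIcc
      rw [uIcc_of_le ht.le] at hprim
      exact (continuousOn_const.add hprim).congr hueq
    obtain ⟨M, hM⟩ := isCompact_Icc.exists_bound_of_continuousOn hucont
    have hm : AEStronglyMeasurable (fun s => L (ξ s) a (ξ' s)) (volume.restrict (Icc (0:ℝ) t)) :=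
      hmeas (fun _ => a) continuous_const
    have hInt : IntegrableOn (fun s => L (ξ s) a (ξ' s)) (Icc (0:ℝ) t) := by
      have hbd : IntegrableOn
          (fun s => |L (ξ s) (u s) (ξ' s)| + K * (|a| + M)) (Icc (0:ℝ) t) :=
        huI.norm.add (integrableOn_const measure_Icc_lt_top.ne)
      refine hbd.mono' hm ?_
      refine (ae_restrict_iff' measurableSet_Icc).2 (Filter.Eventually.of_forall fun s hs => ?_)
      have h1 : |L (ξ s) a (ξ' s) - L (ξ s) (u s) (ξ' s)| ≤ K * |a - u s| := hlip _ _ _ _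
      have h2 : |u s| ≤ M := by simpa [Real.norm_eq_abs] using hM s hs
      have h3 : |a - u s| ≤ |a| + M := (abs_sub _ _).trans (by linarith)
      rw [Real.norm_eq_abs]
      calc |L (ξ s) a (ξ' s)|
          ≤ |L (ξ s) a (ξ' s) - L (ξ s) (u s) (ξ' s)| + |L (ξ s) (u s) (ξ' s)| := by
            have := abs_add_le (L (ξ s) a (ξ' s) - L (ξ s) (u s) (ξ' s)) (L (ξ s) (u s) (ξ' s))
            simpa using this
        _ ≤ K * (|a| + M) + |L (ξ s) (u s) (ξ' s)| := by
            have := mul_le_mul_of_nonneg_left h3 hK0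
            linarith
        _ = |L (ξ s) (u s) (ξ' s)| + K * (|a| + M) := by ring
    rw [← uIcc_of_le ht.le] at hInt
    exact hInt.intervalIntegrable
  · -- backward direction
    rintro ⟨a, ha⟩
    have hga : IntegrableOn (fun s => L (ξ s) a (ξ' s)) (Icc (0:ℝ) t) :=
      (intervalIntegrable_iff_integrableOn_Icc_of_le ht.le).1 ha
    obtain ⟨u, huint, hueq⟩ := picard_exists t ht (fun r y => L (ξ r) y (ξ' r)) K hK0
      (fun r y z => hlip _ _ _ _) hmeas a hga u₀
    refine ⟨u, ?_, hueq⟩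
    rw [← uIcc_of_le ht.le] at huint
    exact huint.intervalIntegrable
end

section
/- Let L satisfy (L1)-(L3), let ξ be a C² minimizer of the Herglotz action with associated C² function u_ξ solving u_ξ' = L(ξ,u_ξ,ξ'), and suppose ξ satisfies the Herglotz equation (d/ds) L_v(ξ,u_ξ,ξ') = L_x(ξ,u_ξ,ξ') + L_u(ξ,u_ξ,ξ') L_v(ξ,u_ξ,ξ'). Define p(s) = L_v(ξ(s),u_ξ(s),ξ'(s)) and H(x,r,p) = sup_v (⟨p,v⟩ - L(x,r,v)). Then (ξ,p,u_ξ) satisfies the Lie (contact characteristic) equations: ξ' = H_p(ξ,u_ξ,p), p' = -H_x(ξ,u_ξ,p) - H_u(ξ,u_ξ,p)·p, and u_ξ' = ⟨p,ξ'⟩ - H(ξ,u_ξ,p). -/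
open MeasureTheory Set Filter Topology

open Set Filter Topology

local notation "⟪" x ", " y "⟫" => @inner ℝ _ _ x y

lemma convex_gradient_ineq {F : Type*} [NormedAddCommGroup F] [InnerProductSpace ℝ F]
    [CompleteSpace F]
    {f : F → ℝ} {g v₀ : F} (hf : ConvexOn ℝ Set.univ f) (hd : HasGradientAt f g v₀) (v : F) :
    f v₀ + ⟪g, v - v₀⟫ ≤ f v := by
  set φ : ℝ → ℝ := fun τ => f (v₀ + τ • (v - v₀)) with hφdef
  have hline : HasDerivAt (fun τ : ℝ => v₀ + τ • (v - v₀)) (v - v₀) 0 := by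
    simpa using ((hasDerivAt_id (0:ℝ)).smul_const (v - v₀)).const_add v₀
  have hd' : HasFDerivAt f (InnerProductSpace.toDual ℝ F g)
      ((fun τ : ℝ => v₀ + τ • (v - v₀)) 0) := by
    simpa using hd.hasFDerivAt
  have hφ' : HasDerivAt φ ⟪g, v - v₀⟫ 0 := by
    have h := hd'.comp_hasDerivAt 0 hline
    simp at h
    exact h
  have hconvφ : ConvexOn ℝ Set.univ φ := by
    have h1 := hf.comp_affineMap (AffineMap.lineMap v₀ v)
    have h2 : (f ∘ (AffineMap.lineMap v₀ v) : ℝ → ℝ) = φ := by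
      funext τ
      simp [hφdef, AffineMap.lineMap_apply, add_comm]
    rw [h2] at h1
    simpa using h1
  have key : ∀ τ ∈ Set.Ioc (0:ℝ) 1, slope φ 0 τ ≤ f v - f v₀ := by
    intro τ hτ
    have h1 : φ τ ≤ (1 - τ) * φ 0 + τ * φ 1 := by
      have := hconvφ.2 (Set.mem_univ (0:ℝ)) (Set.mem_univ (1:ℝ))
        (by linarith [hτ.2] : (0:ℝ) ≤ 1 - τ) hτ.1.le (by ring)
      simpa [smul_eq_mul] using this
    have hφ0 : φ 0 = f v₀ := by simp [hφdef]
    have hφ1 : φ 1 = f v := by simp [hφdef]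
    rw [slope_def_field, sub_zero, div_le_iff₀ hτ.1]
    nlinarith [hτ.1]
  have htend : Tendsto (slope φ 0) (𝓝[>] (0:ℝ)) (𝓝 ⟪g, v - v₀⟫) :=
    (hasDerivAt_iff_tendsto_slope.1 hφ').mono_left
      (nhdsWithin_mono 0 (fun x hx => ne_of_gt hx))
  have hle : ⟪g, v - v₀⟫ ≤ f v - f v₀ :=
    le_of_tendsto htend (Filter.eventually_of_mem (Ioc_mem_nhdsGT one_pos) key)
  linarith

lemma strictconvex_gradient_lt {F : Type*} [NormedAddCommGroup F] [InnerProductSpace ℝ F]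
    [CompleteSpace F]
    {f : F → ℝ} {g v₀ : F} (hf : StrictConvexOn ℝ Set.univ f) (hd : HasGradientAt f g v₀)
    {v : F} (hne : v ≠ v₀) :
    f v₀ + ⟪g, v - v₀⟫ < f v := by
  have hm := convex_gradient_ineq hf.convexOn hd ((1/2 : ℝ) • v₀ + (1/2 : ℝ) • v)
  have hs := hf.2 (Set.mem_univ v₀) (Set.mem_univ v) (Ne.symm hne)
    (by norm_num : (0:ℝ) < 1/2) (by norm_num : (0:ℝ) < 1/2) (by norm_num)
  have hdiff : ((1/2 : ℝ) • v₀ + (1/2 : ℝ) • v) - v₀ = (1/2 : ℝ) • (v - v₀) := by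
    module
  have hin : ⟪g, ((1/2 : ℝ) • v₀ + (1/2 : ℝ) • v) - v₀⟫ = (1/2 : ℝ) * ⟪g, v - v₀⟫ := by
    rw [hdiff, real_inner_smul_right]
  rw [hin] at hm
  have hs' : f ((1/2 : ℝ) • v₀ + (1/2 : ℝ) • v) < (1/2 : ℝ) * f v₀ + (1/2 : ℝ) * f v := by
    simpa [smul_eq_mul] using hs
  linarith


lemma envelope_hasFDerivAt
    {P F : Type*} [NormedAddCommGroup P] [NormedSpace ℝ P] [ProperSpace P]
    [NormedAddCommGroup F] [NormedSpace ℝ F] [ProperSpace F]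
    (g : P → F → ℝ) (h : P → ℝ) (π₀ : P) (v₀ : F) (A : P → F → (P →L[ℝ] ℝ))
    (hg : ∀ π v, HasFDerivAt (fun π' => g π' v) (A π v) π)
    (hA : Continuous fun pv : P × F => A pv.1 pv.2)
    (hgc : Continuous fun pv : P × F => g pv.1 pv.2)
    (hstrict : ∀ v, v ≠ v₀ → g π₀ v < g π₀ v₀)
    (hh : ∀ π, h π = ⨆ v, g π v)
    {δ₀ R : ℝ} (hδ₀ : 0 < δ₀) (hR : ‖v₀‖ + 1 ≤ R)
    (hcoer : ∀ π ∈ Metric.closedBall π₀ δ₀, ∀ v : F, R ≤ ‖v‖ → g π v ≤ g π v₀) :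
    HasFDerivAt h (A π₀ v₀) π₀ := by
  have hmax₀ : ∀ v, g π₀ v ≤ g π₀ v₀ := by
    intro v
    by_cases hv : v = v₀
    · rw [hv]
    · exact (hstrict v hv).le
  have hv₀R : ‖v₀‖ ≤ R := by linarith
  -- existence of maximizers
  have hex : ∀ π ∈ Metric.closedBall π₀ δ₀, ∃ w, ‖w‖ ≤ R ∧ ∀ v, g π v ≤ g π w := by
    intro π hπ
    obtain ⟨w, hw, hwmax⟩ := (isCompact_closedBall (0:F) R).exists_isMaxOn
      ⟨v₀, by simpa [Metric.mem_closedBall] using hv₀R⟩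
      ((hgc.comp (Continuous.prodMk_right π)).continuousOn)
    have hwR : ‖w‖ ≤ R := by simpa [Metric.mem_closedBall] using hw
    refine ⟨w, hwR, fun v => ?_⟩
    rcases le_or_gt ‖v‖ R with hv | hv
    · exact hwmax (by simpa [Metric.mem_closedBall] using hv)
    · exact le_trans (hcoer π hπ v hv.le)
        (hwmax (by simpa [Metric.mem_closedBall] using hv₀R))
  -- value of h at a maximizer
  have hbdd : ∀ π (w : F), (∀ v, g π v ≤ g π w) → h π = g π w := by
    intro π w hw
    rw [hh]
    refine le_antisymm (ciSup_le hw) (le_ciSup ⟨g π w, ?_⟩ w)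
    rintro y ⟨v, rfl⟩
    exact hw v
  -- argmax continuity
  have hconv : ∀ ε > 0, ∃ δ, 0 < δ ∧ δ ≤ δ₀ ∧ ∀ π ∈ Metric.closedBall π₀ δ, ∀ w : F, ‖w‖ ≤ R →
      (∀ v, g π v ≤ g π w) → ‖w - v₀‖ ≤ ε := by
    intro ε hε
    set Kset := Metric.closedBall (0:F) R ∩ {w | ε ≤ ‖w - v₀‖} with hKdef
    by_cases hne : Kset.Nonempty
    · -- compact, pick max of g π₀ on Kset
      have hKc : IsCompact Kset := (isCompact_closedBall 0 R).inter_right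
        (isClosed_le continuous_const ((continuous_id.sub continuous_const).norm))
      obtain ⟨w₁, hw₁K, hw₁max⟩ := hKc.exists_isMaxOn hne
        ((hgc.comp (Continuous.prodMk_right π₀)).continuousOn)
      have hw₁ne : w₁ ≠ v₀ := by
        intro hcon
        have := hw₁K.2
        rw [hcon] at this
        simp only [mem_setOf_eq, sub_self, norm_zero] at this
        linarith
      set η := g π₀ v₀ - g π₀ w₁ with hηdef
      have hηpos : 0 < η := sub_pos.2 (hstrict _ hw₁ne)
      have hKcomp : IsCompact ((Metric.closedBall π₀ δ₀) ×ˢ (Metric.closedBall (0:F) R)) :=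
        (isCompact_closedBall _ _).prod (isCompact_closedBall _ _)
      have huc := hKcomp.uniformContinuousOn_of_continuous hgc.continuousOn
      rw [Metric.uniformContinuousOn_iff_le] at huc
      obtain ⟨δ₁, hδ₁, hδ₁uc⟩ := huc (η/3) (by linarith)
      refine ⟨min δ₀ δ₁, lt_min hδ₀ hδ₁, min_le_left _ _, ?_⟩
      intro π hπ w hwR hwmax
      have hπδ₀ : π ∈ Metric.closedBall π₀ δ₀ :=
        Metric.closedBall_subset_closedBall (min_le_left _ _) hπ
      have hclose : ∀ w' : F, ‖w'‖ ≤ R → |g π w' - g π₀ w'| ≤ η/3 := by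
        intro w' hw'
        have hmem1 : (π, w') ∈ (Metric.closedBall π₀ δ₀) ×ˢ (Metric.closedBall (0:F) R) :=
          ⟨hπδ₀, by simpa [Metric.mem_closedBall] using hw'⟩
        have hmem2 : (π₀, w') ∈ (Metric.closedBall π₀ δ₀) ×ˢ (Metric.closedBall (0:F) R) :=
          ⟨Metric.mem_closedBall_self hδ₀.le, by simpa [Metric.mem_closedBall] using hw'⟩
        have hdist : dist (π, w') (π₀, w') ≤ δ₁ := by
          rw [Prod.dist_eq]
          simp only [dist_self]
          rw [max_eq_left dist_nonneg]
          exact le_trans (by simpa [Metric.mem_closedBall] using hπ) (min_le_right _ _)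
        have := hδ₁uc _ hmem1 _ hmem2 hdist
        rwa [Real.dist_eq] at this
      by_contra hcon
      push_neg at hcon
      have hwK : w ∈ Kset := ⟨by simpa [Metric.mem_closedBall] using hwR, hcon.le⟩
      have h1 : g π w ≤ g π₀ w + η/3 := by
        have := hclose w hwR
        rw [abs_le] at this
        linarith [this.1, this.2]
      have h2 : g π₀ w ≤ g π₀ w₁ := hw₁max hwK
      have h3 : g π₀ v₀ ≤ g π v₀ + η/3 := by
        have := hclose v₀ hv₀R
        rw [abs_le] at this
        linarith [this.1, this.2]
      have h4 : g π v₀ ≤ g π w := hwmax v₀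
      have : g π w ≤ g π w - η/3 := by
        calc g π w ≤ g π₀ w₁ + η/3 := le_trans h1 (by linarith)
        _ = g π₀ v₀ - η + η/3 := by rw [hηdef]; ring
        _ ≤ g π v₀ + η/3 - η + η/3 := by linarith
        _ = g π v₀ - η/3 := by ring
        _ ≤ g π w - η/3 := by linarith
      linarith
    · refine ⟨δ₀, hδ₀, le_refl _, ?_⟩
      intro π hπ w hwR hwmax
      by_contra hcon
      push_neg at hcon
      exact hne ⟨w, by simpa [Metric.mem_closedBall] using hwR, hcon.le⟩
  -- main ε-δ argument
  rw [hasFDerivAt_iff_isLittleO, Asymptotics.isLittleO_iff]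
  intro c hc
  have hAc : ContinuousAt (fun pv : P × F => A pv.1 pv.2) (π₀, v₀) := hA.continuousAt
  rw [Metric.continuousAt_iff] at hAc
  obtain ⟨ε₁, hε₁, hAδ⟩ := hAc c hc
  obtain ⟨δ, hδpos, hδle, hargmax⟩ := hconv (ε₁/2) (half_pos hε₁)
  set δ' := min δ (ε₁/2) with hδ'def
  have hδ'pos : 0 < δ' := lt_min hδpos (half_pos hε₁)
  filter_upwards [Metric.closedBall_mem_nhds π₀ hδ'pos] with π hπ
  have hπδ : π ∈ Metric.closedBall π₀ δ :=
    Metric.closedBall_subset_closedBall (min_le_left _ _) hπ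
  obtain ⟨w, hwR, hwmax⟩ := hex π (Metric.closedBall_subset_closedBall hδle hπδ)
  have hwv₀ : ‖w - v₀‖ ≤ ε₁/2 := hargmax π hπδ w hwR hwmax
  have hAbound : ∀ π' ∈ Metric.closedBall π₀ δ', ∀ w' : F, ‖w' - v₀‖ ≤ ε₁/2 →
      ‖A π' w' - A π₀ v₀‖ ≤ c := by
    intro π' hπ' w' hw'
    have hd : dist (π', w') (π₀, v₀) < ε₁ := by
      rw [Prod.dist_eq]
      apply max_lt
      · calc dist π' π₀ ≤ δ' := by simpa [Metric.mem_closedBall] using hπ'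
          _ ≤ ε₁/2 := min_le_right _ _
          _ < ε₁ := by linarith
      · calc dist w' v₀ = ‖w' - v₀‖ := dist_eq_norm _ _
          _ ≤ ε₁/2 := hw'
          _ < ε₁ := by linarith
    have := hAδ hd
    rw [dist_eq_norm] at this
    exact this.le
  have hMVT : ∀ w' : F, ‖w' - v₀‖ ≤ ε₁/2 →
      ‖(g π w' - (A π₀ v₀) π) - (g π₀ w' - (A π₀ v₀) π₀)‖ ≤ c * ‖π - π₀‖ := by
    intro w' hw'
    exact (convex_closedBall π₀ δ').norm_image_sub_le_of_norm_hasFDerivWithin_le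
      (f := fun π' => g π' w' - (A π₀ v₀) π')
      (f' := fun π' => A π' w' - A π₀ v₀)
      (fun π' hπ' => (((hg π' w').sub ((A π₀ v₀).hasFDerivAt))).hasFDerivWithinAt)
      (fun π' hπ' => hAbound π' hπ' w' hw')
      (Metric.mem_closedBall_self hδ'pos.le) hπ
  have h1 := hMVT w hwv₀
  have h2 := hMVT v₀ (by simpa using (half_pos hε₁).le)
  rw [Real.norm_eq_abs, abs_le] at h1 h2
  have hhπ : h π = g π w := hbdd π w hwmax
  have hhπ₀ : h π₀ = g π₀ v₀ := hbdd π₀ v₀ hmax₀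
  have hmap : (A π₀ v₀) (π - π₀) = (A π₀ v₀) π - (A π₀ v₀) π₀ := map_sub _ _ _
  have hup : h π - h π₀ - (A π₀ v₀) (π - π₀) ≤ c * ‖π - π₀‖ := by
    have hge : g π₀ w ≤ h π₀ := by rw [hhπ₀]; exact hmax₀ w
    rw [hhπ, hmap]
    linarith [h1.2]
  have hlo : -(c * ‖π - π₀‖) ≤ h π - h π₀ - (A π₀ v₀) (π - π₀) := by
    have hge : g π v₀ ≤ h π := by rw [hhπ]; exact hwmax v₀
    rw [hhπ₀, hmap]
    linarith [h2.1]
  rw [Real.norm_eq_abs, abs_le]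
  exact ⟨by simpa using hlo, by simpa using hup⟩


noncomputable def Pq' (n : ℕ) :
    (EuclideanSpace ℝ (Fin n) × ℝ × EuclideanSpace ℝ (Fin n)) →L[ℝ] EuclideanSpace ℝ (Fin n) :=
  (ContinuousLinearMap.snd ℝ ℝ (EuclideanSpace ℝ (Fin n))).comp
    (ContinuousLinearMap.snd ℝ (EuclideanSpace ℝ (Fin n)) (ℝ × EuclideanSpace ℝ (Fin n)))

noncomputable def Jc' (n : ℕ) :
    (EuclideanSpace ℝ (Fin n) × ℝ × EuclideanSpace ℝ (Fin n)) →L[ℝ]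
      (EuclideanSpace ℝ (Fin n) × ℝ × EuclideanSpace ℝ (Fin n)) :=
  (ContinuousLinearMap.fst ℝ (EuclideanSpace ℝ (Fin n)) (ℝ × EuclideanSpace ℝ (Fin n))).prod
    (((ContinuousLinearMap.fst ℝ ℝ (EuclideanSpace ℝ (Fin n))).comp
      (ContinuousLinearMap.snd ℝ (EuclideanSpace ℝ (Fin n)) (ℝ × EuclideanSpace ℝ (Fin n)))).prod 0)

noncomputable def iota3 (n : ℕ) :
    EuclideanSpace ℝ (Fin n) →L[ℝ]
      (EuclideanSpace ℝ (Fin n) × ℝ × EuclideanSpace ℝ (Fin n)) :=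
  (0 : EuclideanSpace ℝ (Fin n) →L[ℝ] EuclideanSpace ℝ (Fin n)).prod
    ((0 : EuclideanSpace ℝ (Fin n) →L[ℝ] ℝ).prod (ContinuousLinearMap.id ℝ _))

noncomputable def iota1 (n : ℕ) :
    EuclideanSpace ℝ (Fin n) →L[ℝ]
      (EuclideanSpace ℝ (Fin n) × ℝ × EuclideanSpace ℝ (Fin n)) :=
  (ContinuousLinearMap.id ℝ _).prod
    ((0 : EuclideanSpace ℝ (Fin n) →L[ℝ] ℝ).prod
     (0 : EuclideanSpace ℝ (Fin n) →L[ℝ] EuclideanSpace ℝ (Fin n)))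

set_option maxHeartbeats 1000000 in
/-- From the Herglotz equation to the Lie (contact characteristic) equations:
with `p = L_v(ξ,u_ξ,ξ')` and `H` the convex conjugate of `L` in `v`, the triple
`(ξ,p,u_ξ)` satisfies the characteristic system. -/
theorem herglotz_to_lie_equations
    (n : ℕ)
    (L : EuclideanSpace ℝ (Fin n) → ℝ → EuclideanSpace ℝ (Fin n) → ℝ)
    (H : EuclideanSpace ℝ (Fin n) → ℝ → EuclideanSpace ℝ (Fin n) → ℝ)
    (K c₀ : ℝ) (θ₀ θbar₀ : ℝ → ℝ)
    (hL_smooth : ContDiff ℝ 2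
      (fun q : EuclideanSpace ℝ (Fin n) × ℝ × EuclideanSpace ℝ (Fin n) =>
        L q.1 q.2.1 q.2.2))
    (hconv : ∀ x r, StrictConvexOn ℝ univ (fun v => L x r v))
    (hLr : ∀ x r v, |deriv (fun r' => L x r' v) r| ≤ K)
    (hθ₀_nonneg : ∀ r, 0 ≤ θ₀ r) (hθ₀_mono : Monotone θ₀) (hc₀ : 0 < c₀)
    (hθ₀_sl : Filter.Tendsto (fun r => θ₀ r / r) Filter.atTop Filter.atTop)
    (hL2 : ∀ x v, θ₀ ‖v‖ - c₀ ≤ L x 0 v ∧ L x 0 v ≤ θbar₀ ‖v‖)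
    (hH : ∀ x r q, H x r q = ⨆ v : EuclideanSpace ℝ (Fin n),
      (inner ℝ q v - L x r v : ℝ))
    (t : ℝ) (ht : 0 < t)
    (ξ : ℝ → EuclideanSpace ℝ (Fin n)) (u : ℝ → ℝ)
    (hξC2 : ContDiff ℝ 2 ξ) (huC2 : ContDiff ℝ 2 u)
    (hcara : ∀ s ∈ Icc (0:ℝ) t,
      HasDerivAt u (L (ξ s) (u s) (deriv ξ s)) s)
    (p : ℝ → EuclideanSpace ℝ (Fin n))
    (hp : ∀ s, p s = gradient (fun v => L (ξ s) (u s) v) (deriv ξ s))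
    (hHerglotz : ∀ s ∈ Icc (0:ℝ) t,
      HasDerivAt p
        (gradient (fun x => L x (u s) (deriv ξ s)) (ξ s) +
          (deriv (fun r => L (ξ s) r (deriv ξ s)) (u s)) • p s) s) :
    ∀ s ∈ Icc (0:ℝ) t,
      deriv ξ s = gradient (fun q => H (ξ s) (u s) q) (p s) ∧
      deriv p s =
        -(gradient (fun x => H x (u s) (p s)) (ξ s)) -
          (deriv (fun r => H (ξ s) r (p s)) (u s)) • p s ∧
      deriv u s = (inner ℝ (p s) (deriv ξ s) : ℝ) - H (ξ s) (u s) (p s) := by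
  intro s hs
  set x₀ := ξ s with hx₀
  set r₀ := u s with hr₀
  set v₀ := deriv ξ s with hv₀
  set p₀ := p s with hp₀
  set Φ : EuclideanSpace ℝ (Fin n) × ℝ × EuclideanSpace ℝ (Fin n) → ℝ :=
    fun q => L q.1 q.2.1 q.2.2 with hΦdef
  have hΦd : Differentiable ℝ Φ := hL_smooth.differentiable (by norm_num)
  set g : (EuclideanSpace ℝ (Fin n) × ℝ × EuclideanSpace ℝ (Fin n)) →
      EuclideanSpace ℝ (Fin n) → ℝ :=
    fun π v => (inner ℝ π.2.2 v : ℝ) - L π.1 π.2.1 v with hgdef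
  set hfun : (EuclideanSpace ℝ (Fin n) × ℝ × EuclideanSpace ℝ (Fin n)) → ℝ :=
    fun π => H π.1 π.2.1 π.2.2 with hhdef
  set A : (EuclideanSpace ℝ (Fin n) × ℝ × EuclideanSpace ℝ (Fin n)) →
      EuclideanSpace ℝ (Fin n) →
      ((EuclideanSpace ℝ (Fin n) × ℝ × EuclideanSpace ℝ (Fin n)) →L[ℝ] ℝ) :=
    fun π v => (innerSL ℝ v).comp (Pq' n) - (fderiv ℝ Φ (π.1, π.2.1, v)).comp (Jc' n)
    with hAdef
  set π₀ : EuclideanSpace ℝ (Fin n) × ℝ × EuclideanSpace ℝ (Fin n) := (x₀, r₀, p₀) with hπ₀def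
  -- derivative of g in π
  have hpt : ∀ (π : EuclideanSpace ℝ (Fin n) × ℝ × EuclideanSpace ℝ (Fin n))
      (v : EuclideanSpace ℝ (Fin n)),
      Jc' n π + ((0 : EuclideanSpace ℝ (Fin n)), (0:ℝ), v) = (π.1, π.2.1, v) := by
    intro π v
    simp [Jc', Prod.ext_iff]
  have hg : ∀ π v, HasFDerivAt (fun π' => g π' v) (A π v) π := by
    intro π v
    have hgrep : (fun π' => g π' v) =
        fun π' => ((innerSL ℝ v).comp (Pq' n)) π' - Φ (Jc' n π' + ((0:EuclideanSpace ℝ (Fin n)), (0:ℝ), v)) := by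
      funext π'
      rw [hpt]
      simp [hgdef, hΦdef, Pq', real_inner_comm, mul_comm]
    rw [hgrep]
    have h1 : HasFDerivAt
        (fun π' => Φ (Jc' n π' + ((0:EuclideanSpace ℝ (Fin n)), (0:ℝ), v)))
        ((fderiv ℝ Φ (π.1, π.2.1, v)).comp (Jc' n)) π := by
      have hΦat : HasFDerivAt Φ (fderiv ℝ Φ (π.1, π.2.1, v))
          ((Jc' n) π + ((0:EuclideanSpace ℝ (Fin n)), (0:ℝ), v)) := by
        rw [hpt]
        exact (hΦd _).hasFDerivAt
      exact hΦat.comp π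
        ((Jc' n).hasFDerivAt.add_const ((0:EuclideanSpace ℝ (Fin n)), (0:ℝ), v))
    exact (((innerSL ℝ v).comp (Pq' n)).hasFDerivAt).sub h1
  -- continuity of A
  have hAcont : Continuous (fun pv :
      (EuclideanSpace ℝ (Fin n) × ℝ × EuclideanSpace ℝ (Fin n)) × EuclideanSpace ℝ (Fin n) =>
      A pv.1 pv.2) := by
    rw [hAdef]
    apply Continuous.sub
    · exact Continuous.clm_comp ((innerSL ℝ).continuous.comp continuous_snd) continuous_const
    · refine Continuous.clm_comp ?_ continuous_const
      refine (hL_smooth.continuous_fderiv (by norm_num)).comp ?_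
      exact (continuous_fst.fst).prodMk ((continuous_fst.snd.fst).prodMk continuous_snd)
  -- continuity of g
  have hgc : Continuous (fun pv :
      (EuclideanSpace ℝ (Fin n) × ℝ × EuclideanSpace ℝ (Fin n)) × EuclideanSpace ℝ (Fin n) =>
      g pv.1 pv.2) := by
    rw [hgdef]
    apply Continuous.sub
    · exact continuous_inner.comp ((continuous_fst.snd.snd).prodMk continuous_snd)
    · exact hL_smooth.continuous.comp
        ((continuous_fst.fst).prodMk ((continuous_fst.snd.fst).prodMk continuous_snd))
  -- gradient of L in v at v₀
  have hLvder : HasFDerivAt (fun v => L x₀ r₀ v)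
      ((fderiv ℝ Φ (x₀, r₀, v₀)).comp (iota3 n)) v₀ := by
    have hrep : (fun v => L x₀ r₀ v) = fun v => Φ ((x₀, r₀, (0:EuclideanSpace ℝ (Fin n))) + iota3 n v) := by
      funext v
      simp [hΦdef, iota3]
    rw [hrep]
    have hpt3 : (x₀, r₀, (0:EuclideanSpace ℝ (Fin n))) + iota3 n v₀ = (x₀, r₀, v₀) := by
      simp [iota3, Prod.ext_iff]
    have hΦat : HasFDerivAt Φ (fderiv ℝ Φ (x₀, r₀, v₀))
        ((x₀, r₀, (0:EuclideanSpace ℝ (Fin n))) + iota3 n v₀) := by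
      rw [hpt3]; exact (hΦd _).hasFDerivAt
    exact hΦat.comp v₀ ((iota3 n).hasFDerivAt.const_add _)
  have hLvgrad : HasGradientAt (fun v => L x₀ r₀ v) p₀ v₀ := by
    rw [hp₀, hp s, hx₀, hr₀, hv₀]
    exact (hLvder.differentiableAt).hasGradientAt
  -- strict maximality at π₀
  have hstrict : ∀ v, v ≠ v₀ → g π₀ v < g π₀ v₀ := by
    intro v hv
    have := strictconvex_gradient_lt (hconv x₀ r₀) hLvgrad hv
    have hsub : (inner ℝ p₀ (v - v₀) : ℝ) = inner ℝ p₀ v - inner ℝ p₀ v₀ := inner_sub_right _ _ _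
    simp only [hgdef, hπ₀def]
    rw [hsub] at this
    linarith
  have hmax₀ : ∀ v, g π₀ v ≤ g π₀ v₀ := by
    intro v
    by_cases hv : v = v₀
    · rw [hv]
    · exact (hstrict v hv).le
  -- coercivity of L
  have hK0 : 0 ≤ K := le_trans (abs_nonneg _) (hLr x₀ 0 v₀)
  have hcoerL : ∀ x r (v : EuclideanSpace ℝ (Fin n)), θ₀ ‖v‖ - c₀ - K * |r| ≤ L x r v := by
    intro x r v
    have hψdiff : ∀ ρ : ℝ, HasDerivWithinAt (fun ρ' => L x ρ' v)
        (deriv (fun ρ' => L x ρ' v) ρ) univ ρ := by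
      intro ρ
      have hdiff : DifferentiableAt ℝ (fun ρ' => L x ρ' v) ρ := by
        have hrep : (fun ρ' : ℝ => L x ρ' v) = fun ρ' => Φ (x, ρ', v) := rfl
        rw [hrep]
        exact (hΦd _).comp ρ (by fun_prop)
      exact hdiff.hasDerivAt.hasDerivWithinAt
    have hb := Convex.norm_image_sub_le_of_norm_hasDerivWithin_le
      (f := fun ρ' => L x ρ' v) (f' := fun ρ => deriv (fun ρ' => L x ρ' v) ρ)
      (fun ρ _ => hψdiff ρ)
      (fun ρ _ => by rw [Real.norm_eq_abs]; exact hLr x ρ v)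
      convex_univ (mem_univ (0:ℝ)) (mem_univ r)
    rw [sub_zero, Real.norm_eq_abs, Real.norm_eq_abs, abs_le] at hb
    have h0 := (hL2 x v).1
    linarith [hb.1]
  -- choice of δ₀ : on closedBall π₀ δ₀ we control r, q, and g · v₀
  have hgv₀cont : Continuous (fun π : EuclideanSpace ℝ (Fin n) × ℝ × EuclideanSpace ℝ (Fin n) => g π v₀) :=
    hgc.comp (continuous_id.prodMk continuous_const)
  obtain ⟨δc, hδcpos, hδc⟩ := Metric.continuousAt_iff.1 hgv₀cont.continuousAt 1 one_pos
  set δ₀ : ℝ := min 1 (δc / 2) with hδ₀def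
  have hδ₀pos : 0 < δ₀ := lt_min one_pos (by linarith)
  have hball : ∀ π ∈ Metric.closedBall π₀ δ₀,
      ‖π.2.2‖ ≤ ‖p₀‖ + 1 ∧ |π.2.1| ≤ |r₀| + 1 ∧ g π₀ v₀ - 1 ≤ g π v₀ := by
    intro π hπ
    rw [Metric.mem_closedBall] at hπ
    have hd2 : dist π.2 π₀.2 ≤ dist π π₀ := by
      rw [Prod.dist_eq]; exact le_max_right _ _
    have hdq : dist π.2.2 p₀ ≤ dist π π₀ := by
      refine le_trans ?_ hd2
      rw [Prod.dist_eq]; exact le_max_right _ _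
    have hdr : dist π.2.1 r₀ ≤ dist π π₀ := by
      refine le_trans ?_ hd2
      rw [Prod.dist_eq]; exact le_max_left _ _
    have hδ₀1 : δ₀ ≤ 1 := min_le_left _ _
    refine ⟨?_, ?_, ?_⟩
    · have := dist_eq_norm π.2.2 p₀ ▸ hdq
      have h2 := norm_le_norm_add_norm_sub' π.2.2 p₀
      have : ‖π.2.2 - p₀‖ ≤ 1 := by
        rw [← dist_eq_norm]; exact le_trans hdq (le_trans hπ hδ₀1)
      have h3 := norm_sub_norm_le π.2.2 p₀
      linarith [abs_le.1 (abs_norm_sub_norm_le π.2.2 p₀)]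
    · have : |π.2.1 - r₀| ≤ 1 := by
        rw [← Real.dist_eq]; exact le_trans hdr (le_trans hπ hδ₀1)
      have := abs_le.1 this
      have h4 := abs_le.1 (le_refl |r₀|) -- dummy
      rw [abs_le]
      constructor <;> [linarith [neg_abs_le r₀]; linarith [le_abs_self r₀]]
    · have hlt : dist π π₀ < δc := lt_of_le_of_lt (le_trans hπ (min_le_right _ _)) (by linarith)
      have := hδc hlt
      rw [Real.dist_eq, abs_lt] at this
      linarith [this.1]
  -- choice of R via superlinearity
  set Q : ℝ := ‖p₀‖ + 1 with hQdef
  set C₁ : ℝ := c₀ + K * (|r₀| + 1) with hC₁def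
  set M : ℝ := g π₀ v₀ - 1 with hMdef
  have hC₁0 : 0 ≤ C₁ := by
    have : 0 ≤ K * (|r₀| + 1) := mul_nonneg hK0 (by positivity)
    simp only [hC₁def]; linarith
  obtain ⟨R₁, hR₁⟩ := (hθ₀_sl.eventually_ge_atTop (Q + C₁ + |M| + 1)).exists_forall_of_atTop
  set R : ℝ := max R₁ (max 1 (‖v₀‖ + 1)) with hRdef
  have hRv₀ : ‖v₀‖ + 1 ≤ R := le_trans (le_max_right _ _) (le_max_right _ _)
  have hR1 : (1:ℝ) ≤ R := le_trans (le_max_left _ _) (le_max_right _ _)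
  have hcoer : ∀ π ∈ Metric.closedBall π₀ δ₀, ∀ v : EuclideanSpace ℝ (Fin n),
      R ≤ ‖v‖ → g π v ≤ g π v₀ := by
    intro π hπ v hv
    obtain ⟨hq, hr, hgv₀⟩ := hball π hπ
    have hm1 : (1:ℝ) ≤ ‖v‖ := le_trans hR1 hv
    have hm0 : (0:ℝ) < ‖v‖ := by linarith
    have hθ : Q + C₁ + |M| + 1 ≤ θ₀ ‖v‖ / ‖v‖ := hR₁ ‖v‖ (le_trans (le_max_left _ _) hv)
    have hθ' : (Q + C₁ + |M| + 1) * ‖v‖ ≤ θ₀ ‖v‖ := by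
      rw [le_div_iff₀ hm0] at hθ
      exact hθ
    have hinner : (inner ℝ π.2.2 v : ℝ) ≤ Q * ‖v‖ :=
      le_trans (real_inner_le_norm _ _) (mul_le_mul_of_nonneg_right hq (norm_nonneg v))
    have hLlow : θ₀ ‖v‖ - c₀ - K * |π.2.1| ≤ L π.1 π.2.1 v := hcoerL _ _ _
    have hKr : K * |π.2.1| ≤ K * (|r₀| + 1) := mul_le_mul_of_nonneg_left hr hK0
    have hgub : g π v ≤ Q * ‖v‖ - θ₀ ‖v‖ + C₁ := by
      simp only [hgdef, hC₁def]
      have : L π.1 π.2.1 v ≥ θ₀ ‖v‖ - c₀ - K * (|r₀| + 1) := by linarith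
      linarith [hinner]
    have : g π v ≤ M := by
      have hs1 : Q * ‖v‖ - θ₀ ‖v‖ + C₁ ≤ -(C₁ + |M| + 1) * ‖v‖ + C₁ := by nlinarith
      have hs2 : -(C₁ + |M| + 1) * ‖v‖ + C₁ ≤ -(C₁ + |M| + 1) + C₁ := by
        nlinarith [hm1, hC₁0, abs_nonneg M]
      have hs3 : -(C₁ + |M| + 1) + C₁ ≤ M := by
        have := neg_abs_le M
        linarith
      linarith
    linarith
  -- apply the envelope theorem
  have hhval : ∀ π, hfun π = ⨆ v, g π v := fun π => hH π.1 π.2.1 π.2.2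
  have HF : HasFDerivAt hfun (A π₀ v₀) π₀ :=
    envelope_hasFDerivAt g hfun π₀ v₀ A hg hAcont hgc hstrict hhval hδ₀pos hRv₀ hcoer
  set Λ := fderiv ℝ Φ (x₀, r₀, v₀) with hΛdef
  set Ψ := A π₀ v₀ with hΨdef
  -- Fenchel identity
  have hmax₀' : ∀ v : EuclideanSpace ℝ (Fin n),
      (inner ℝ p₀ v : ℝ) - L x₀ r₀ v ≤ (inner ℝ p₀ v₀ : ℝ) - L x₀ r₀ v₀ := by
    intro v
    simpa [hgdef, hπ₀def] using hmax₀ v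
  have hfen : H x₀ r₀ p₀ = (inner ℝ p₀ v₀ : ℝ) - L x₀ r₀ v₀ := by
    rw [hH]
    refine le_antisymm (ciSup_le fun v => hmax₀' v)
      (le_ciSup (f := fun v : EuclideanSpace ℝ (Fin n) => (inner ℝ p₀ v : ℝ) - L x₀ r₀ v)
        ⟨(inner ℝ p₀ v₀ : ℝ) - L x₀ r₀ v₀, ?_⟩ v₀)
    rintro y ⟨v, rfl⟩
    exact hmax₀' v
  -- first equation
  have hιq : HasFDerivAt
      (fun q : EuclideanSpace ℝ (Fin n) => ((x₀ : EuclideanSpace ℝ (Fin n)), (r₀ : ℝ), q))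
      (iota3 n) p₀ := by
    have hrep : (fun q : EuclideanSpace ℝ (Fin n) =>
        ((x₀ : EuclideanSpace ℝ (Fin n)), (r₀ : ℝ), q)) =
        fun q => (x₀, r₀, (0 : EuclideanSpace ℝ (Fin n))) + iota3 n q := by
      funext q
      simp [iota3, Prod.ext_iff]
    rw [hrep]
    exact (iota3 n).hasFDerivAt.const_add _
  have HFq : HasFDerivAt (fun q => H x₀ r₀ q) (Ψ.comp (iota3 n)) p₀ := by
    have h := HF.comp p₀ hιq
    exact h
  have hΨq : Ψ.comp (iota3 n) = InnerProductSpace.toDual ℝ (EuclideanSpace ℝ (Fin n)) v₀ := by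
    ext d
    simp [hΨdef, hAdef, Pq', Jc', iota3, Prod.mk_zero_zero]
  have hgradq : HasGradientAt (fun q => H x₀ r₀ q) v₀ p₀ := by
    rw [hasGradientAt_iff_hasFDerivAt, ← hΨq]
    exact HFq
  refine ⟨(hgradq.gradient).symm, ?_, ?_⟩
  · -- second equation
    have hι1 : HasFDerivAt
        (fun x : EuclideanSpace ℝ (Fin n) => (x, (r₀ : ℝ), p₀)) (iota1 n) x₀ := by
      have hrep : (fun x : EuclideanSpace ℝ (Fin n) => (x, (r₀ : ℝ), p₀)) =
          fun x => iota1 n x + ((0 : EuclideanSpace ℝ (Fin n)), r₀, p₀) := by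
        funext x
        simp [iota1, Prod.ext_iff]
      rw [hrep]
      exact (iota1 n).hasFDerivAt.add_const _
    have HFx : HasFDerivAt (fun x => H x r₀ p₀) (Ψ.comp (iota1 n)) x₀ := by
      have h := HF.comp x₀ hι1
      exact h
    have hι1L : HasFDerivAt
        (fun x : EuclideanSpace ℝ (Fin n) => (x, (r₀ : ℝ), v₀)) (iota1 n) x₀ := by
      have hrep : (fun x : EuclideanSpace ℝ (Fin n) => (x, (r₀ : ℝ), v₀)) =
          fun x => iota1 n x + ((0 : EuclideanSpace ℝ (Fin n)), r₀, v₀) := by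
        funext x
        simp [iota1, Prod.ext_iff]
      rw [hrep]
      exact (iota1 n).hasFDerivAt.add_const _
    have HLx : HasFDerivAt (fun x => L x r₀ v₀) (Λ.comp (iota1 n)) x₀ :=
      by have h := (hΦd (x₀, r₀, v₀)).hasFDerivAt.comp x₀ hι1L; exact h
    have hGLx : HasGradientAt (fun x => L x r₀ v₀)
        (gradient (fun x => L x r₀ v₀) x₀) x₀ := (HLx.differentiableAt).hasGradientAt
    have htodualx : (InnerProductSpace.toDual ℝ (EuclideanSpace ℝ (Fin n)))
        (gradient (fun x => L x r₀ v₀) x₀) = Λ.comp (iota1 n) :=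
      hGLx.hasFDerivAt.unique HLx
    have hΨx : Ψ.comp (iota1 n) = -(Λ.comp (iota1 n)) := by
      ext d
      simp [hΨdef, hAdef, Pq', Jc', iota1, Prod.mk_zero_zero]
      rfl
    have hgradx : HasGradientAt (fun x => H x r₀ p₀)
        (-(gradient (fun x => L x r₀ v₀) x₀)) x₀ := by
      rw [hasGradientAt_iff_hasFDerivAt, map_neg, htodualx, ← hΨx]
      exact HFx
    -- r-derivatives
    have hιr : HasDerivAt (fun r : ℝ => ((x₀ : EuclideanSpace ℝ (Fin n)), r, p₀))
        (((0 : EuclideanSpace ℝ (Fin n)), (1:ℝ), (0 : EuclideanSpace ℝ (Fin n)))) r₀ :=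
      (hasDerivAt_const r₀ x₀).prodMk ((hasDerivAt_id r₀).prodMk (hasDerivAt_const r₀ p₀))
    have HFr : HasDerivAt (fun r => H x₀ r p₀)
        (Ψ ((0 : EuclideanSpace ℝ (Fin n)), (1:ℝ), (0 : EuclideanSpace ℝ (Fin n)))) r₀ :=
      by have h := HF.comp_hasDerivAt r₀ hιr; exact h
    have hιrL : HasDerivAt (fun r : ℝ => ((x₀ : EuclideanSpace ℝ (Fin n)), r, v₀))
        (((0 : EuclideanSpace ℝ (Fin n)), (1:ℝ), (0 : EuclideanSpace ℝ (Fin n)))) r₀ :=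
      (hasDerivAt_const r₀ x₀).prodMk ((hasDerivAt_id r₀).prodMk (hasDerivAt_const r₀ v₀))
    have HLr2 : HasDerivAt (fun r => L x₀ r v₀)
        (Λ ((0 : EuclideanSpace ℝ (Fin n)), (1:ℝ), (0 : EuclideanSpace ℝ (Fin n)))) r₀ :=
      by have h := (hΦd (x₀, r₀, v₀)).hasFDerivAt.comp_hasDerivAt r₀ hιrL; exact h
    have hΨr : Ψ ((0 : EuclideanSpace ℝ (Fin n)), (1:ℝ), (0 : EuclideanSpace ℝ (Fin n))) =
        -(Λ ((0 : EuclideanSpace ℝ (Fin n)), (1:ℝ), (0 : EuclideanSpace ℝ (Fin n)))) := by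
      simp [hΨdef, hAdef, Pq', Jc', Prod.mk_zero_zero]
      rfl
    have hHG := (hHerglotz s hs).deriv
    rw [← hx₀, ← hr₀, ← hv₀, ← hp₀] at hHG
    rw [hHG, hgradx.gradient, HFr.deriv, hΨr, HLr2.deriv]
    rw [neg_neg, neg_smul, sub_neg_eq_add]
  · -- third equation
    have hder_u := (hcara s hs).deriv
    rw [← hx₀, ← hr₀, ← hv₀] at hder_u
    rw [hder_u, hfen]
    ring
end
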